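/- Let s ≥ 2, let T = ℕ \ {r·s + t + 1 : r, t ≥ 0, r + t ≤ s - 2}, and let d be a positive integer coprime to s(s-1). Then S = {h/d : h ∈ T, d ∣ h} is a numerical semigroup, and the number of gaps of S (its genus) satisfies: if d divides s² - s + 1, the genus of S equals (1/2)((s² - s + 1)/d - 1). -/
import Mathlib


/-- The set T = ℕ \ {r·s + t + 1 : r + t ≤ s - 2}. -/
def hermT (s : ℕ) : Set ℕ :=
  {x : ℕ | ¬ ∃ r t : ℕ, r + t ≤ s - 2 ∧ x = r * s + t + 1}

/-- S = {h/d : h ∈ T, d ∣ h}. -/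
def hermS (s d : ℕ) : Set ℕ :=
  {x : ℕ | ∃ h ∈ hermT s, d ∣ h ∧ x = h / d}

lemma herm_euclid (s q m r e : ℕ) (hm : m < s) (he : e < s)
    (h : s * q + m = s * r + e) : q = r ∧ m = e := by
  rcases lt_trichotomy q r with h1 | h1 | h1
  · have h2 : s * (q + 1) ≤ s * r := Nat.mul_le_mul le_rfl h1
    have h3 : s * (q + 1) = s * q + s := by ring
    omega
  · subst h1; omega
  · have h2 : s * (r + 1) ≤ s * q := Nat.mul_le_mul le_rfl h1
    have h3 : s * (r + 1) = s * r + s := by ring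
    omega

lemma herm_decomp (s : ℕ) (hs : 2 ≤ s) (x : ℕ) : ∃ q m, s * q + m = x ∧ m < s :=
  ⟨x / s, x % s, Nat.div_add_mod x s, Nat.mod_lt x (by omega)⟩

lemma notT_iff {s : ℕ} (hs : 2 ≤ s) (q m : ℕ) (hm : m < s) :
    (s * q + m) ∉ hermT s ↔ (m ≠ 0 ∧ q + m < s) := by
  simp only [hermT, Set.mem_setOf_eq, not_not]
  constructor
  · rintro ⟨r, t, hrt, heq⟩
    have h2 : r * s + t + 1 = s * r + (t + 1) := by ring
    have := herm_euclid s q m r (t + 1) hm (by omega) (heq.trans h2)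
    omega
  · rintro ⟨h1, h2⟩
    refine ⟨q, m - 1, by omega, ?_⟩
    have h3 : q * s = s * q := mul_comm q s
    omega

lemma memT_char {s : ℕ} (hs : 2 ≤ s) (q m : ℕ) (hm : m < s)
    (h : s * q + m ∈ hermT s) : m = 0 ∨ s ≤ q + m := by
  by_contra hc
  push_neg at hc
  exact ((notT_iff hs q m hm).mpr ⟨hc.1, by omega⟩) h

lemma hermT_zero (s : ℕ) : 0 ∈ hermT s := by
  rintro ⟨r, t, hrt, heq⟩
  have : r * s = s * r := mul_comm r s
  omega

/-- T is closed under addition. -/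
lemma hermT_add {s : ℕ} (hs : 2 ≤ s) {x y : ℕ} (hx : x ∈ hermT s) (hy : y ∈ hermT s) :
    x + y ∈ hermT s := by
  obtain ⟨q1, m1, rfl, hm1⟩ := herm_decomp s hs x
  obtain ⟨q2, m2, rfl, hm2⟩ := herm_decomp s hs y
  have c1 := memT_char hs q1 m1 hm1 hx
  have c2 := memT_char hs q2 m2 hm2 hy
  by_contra hc
  rcases lt_or_ge (m1 + m2) s with hms | hms
  · have heq : s * (q1 + q2) + (m1 + m2) = s * q1 + m1 + (s * q2 + m2) := by ring
    have hc' : s * (q1 + q2) + (m1 + m2) ∉ hermT s := by rwa [heq]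
    have := (notT_iff hs (q1 + q2) (m1 + m2) hms).mp hc'
    omega
  · have hms' : m1 + m2 - s < s := by omega
    have hmul : s * (q1 + q2 + 1) = s * q1 + s * q2 + s := by ring
    have heq : s * (q1 + q2 + 1) + (m1 + m2 - s) = s * q1 + m1 + (s * q2 + m2) := by omega
    have hc' : s * (q1 + q2 + 1) + (m1 + m2 - s) ∉ hermT s := by rwa [heq]
    have := (notT_iff hs (q1 + q2 + 1) (m1 + m2 - s) hms').mp hc'
    omega

/-- Elements not in T are at most s^2 - s - 1. -/
lemma notT_small {s : ℕ} (hs : 2 ≤ s) {y : ℕ} (hy : y ∉ hermT s) :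
    y + s + 2 ≤ s * s + 2 ∧ y + s ≤ s * s - 1 := by
  simp only [hermT, Set.mem_setOf_eq, not_not] at hy
  obtain ⟨r, t, hrt, rfl⟩ := hy
  have h1 : r * s ≤ (s - 2) * s := Nat.mul_le_mul (by omega) le_rfl
  have h2 : (s - 2) * s + 2 * s = s * s := by
    rw [← Nat.add_mul, Nat.sub_add_cancel hs]
  omega

lemma hermT_of_big {s : ℕ} (hs : 2 ≤ s) {y : ℕ} (hy : s * s - s + 1 ≤ y) :
    y ∈ hermT s := by
  by_contra hc
  have := notT_small hs hc
  omega

/-- Symmetry: for 0 < x < n := s^2 - s + 1, exactly one of x, n - x lies in T. -/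
lemma hermT_symm {s : ℕ} (hs : 2 ≤ s) {x : ℕ} (h0 : 0 < x) (hn : x < s * s - s + 1) :
    x ∈ hermT s ↔ (s * s - s + 1 - x) ∉ hermT s := by
  obtain ⟨q, m, rfl, hm⟩ := herm_decomp s hs x
  constructor
  · intro hT
    rcases memT_char hs q m hm hT with hm0 | hqm
    · subst hm0
      have hq1 : q ≠ 0 := by rintro rfl; simp at h0
      have hq2 : q ≤ s - 1 := by
        by_contra hq
        have : s * s ≤ s * q := Nat.mul_le_mul le_rfl (by omega)
        omega
      have f1 : s * (s - 1 - q) + s * q = s * (s - 1) := by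
        rw [← Nat.mul_add]; congr 1; omega
      have f2 : s * (s - 1) + s * 1 = s * s := by
        rw [← Nat.mul_add]; congr 1; omega
      have key : s * s - s + 1 - (s * q + 0) = s * (s - 1 - q) + 1 := by omega
      rw [key]
      exact (notT_iff hs (s - 1 - q) 1 (by omega)).mpr ⟨by omega, by omega⟩
    · have hm1 : m ≠ 0 := by
        intro h; subst h
        have : s * s ≤ s * q := Nat.mul_le_mul le_rfl (by omega)
        omega
      have hm2 : 2 ≤ m := by
        by_contra h
        have hm1' : m = 1 := by omega
        have : s * (s - 1) ≤ s * q := Nat.mul_le_mul le_rfl (by omega)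
        have f2 : s * (s - 1) + s * 1 = s * s := by
          rw [← Nat.mul_add]; congr 1; omega
        omega
      have hq2 : q ≤ s - 2 := by
        by_contra hq
        have : s * (s - 1) ≤ s * q := Nat.mul_le_mul le_rfl (by omega)
        have f2 : s * (s - 1) + s * 1 = s * s := by
          rw [← Nat.mul_add]; congr 1; omega
        omega
      have f1 : s * (s - 2 - q) + s * q = s * (s - 2) := by
        rw [← Nat.mul_add]; congr 1; omega
      have f2 : s * (s - 2) + s * 2 = s * s := by
        rw [← Nat.mul_add]; congr 1; omega
      have key : s * s - s + 1 - (s * q + m) = s * (s - 2 - q) + (s + 1 - m) := by omega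
      rw [key]
      exact (notT_iff hs (s - 2 - q) (s + 1 - m) (by omega)).mpr ⟨by omega, by omega⟩
  · intro hT
    by_contra hx
    obtain ⟨hm0, hqm⟩ := (notT_iff hs q m hm).mp hx
    simp only [hermT, Set.mem_setOf_eq, not_not] at hT
    obtain ⟨r, t, hrt, heq⟩ := hT
    have hrs : r * s = s * r := mul_comm r s
    rcases lt_or_ge s 3 with hs2 | hs3
    · have : s = 2 := by omega
      subst this
      omega
    · have e1 : s * (q + r) = s * q + s * r := by ring
      rcases lt_trichotomy (q + r) (s - 2) with h1 | h1 | h1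
      · have g1 : s * (q + r) ≤ s * (s - 3) := Nat.mul_le_mul le_rfl (by omega)
        have g2 : s * (s - 3) + s * 3 = s * s := by
          rw [← Nat.mul_add]; congr 1; omega
        omega
      · have g1 : s * (q + r) = s * (s - 2) := by rw [h1]
        have g2 : s * (s - 2) + s * 2 = s * s := by
          rw [← Nat.mul_add]; congr 1; omega
        omega
      · have g1 : s * (s - 1) ≤ s * (q + r) := Nat.mul_le_mul le_rfl (by omega)
        have g2 : s * (s - 1) + s * 1 = s * s := by
          rw [← Nat.mul_add]; congr 1; omega
        omega

lemma mem_hermS_iff {s d : ℕ} (hd : 0 < d) (x : ℕ) :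
    x ∈ hermS s d ↔ d * x ∈ hermT s := by
  constructor
  · rintro ⟨h, hT, hdvd, rfl⟩
    rwa [Nat.mul_div_cancel' hdvd]
  · intro h
    exact ⟨d * x, h, ⟨x, rfl⟩, (Nat.mul_div_cancel_left x hd).symm⟩

/-- for d coprime to s(s-1), S is a numerical semigroup, and if
d ∣ s² - s + 1 then the genus of S is (1/2)((s²-s+1)/d - 1). -/
theorem stmt13 (s d : ℕ) (hs : 2 ≤ s) (hd : 0 < d)
    (hcop : Nat.Coprime d (s * (s - 1))) :
    (0 ∈ hermS s d ∧
      (∀ a b : ℕ, a ∈ hermS s d → b ∈ hermS s d → a + b ∈ hermS s d) ∧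
      (hermS s d)ᶜ.Finite) ∧
    (d ∣ s ^ 2 - s + 1 →
      {x : ℕ | x ∉ hermS s d}.ncard = ((s ^ 2 - s + 1) / d - 1) / 2) := by
  classical
  have hpow : s ^ 2 = s * s := by ring
  have hzero : (0 : ℕ) ∈ hermS s d := by
    rw [mem_hermS_iff hd, mul_zero]
    exact hermT_zero s
  refine ⟨⟨hzero, ?_, ?_⟩, ?_⟩
  · intro a b ha hb
    rw [mem_hermS_iff hd] at ha hb ⊢
    rw [mul_add]
    exact hermT_add hs ha hb
  · apply Set.Finite.subset (Set.finite_Iio (s * s))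
    intro x hx
    simp only [Set.mem_compl_iff] at hx
    simp only [Set.mem_Iio]
    by_contra hlt
    push_neg at hlt
    apply hx
    rw [mem_hermS_iff hd]
    apply hermT_of_big hs
    have h1 : x ≤ d * x := Nat.le_mul_of_pos_left x hd
    have h2 : s * 2 ≤ s * s := Nat.mul_le_mul le_rfl hs
    omega
  · intro hdvd
    have hdvd' : d ∣ s * s - s + 1 := by rwa [hpow] at hdvd
    obtain ⟨N, hN⟩ := hdvd'
    have hn' : d * N = s * s - s + 1 := hN.symm
    have hNdiv : (s ^ 2 - s + 1) / d = N := by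
      rw [hpow, hN, Nat.mul_div_cancel_left _ hd]
    rw [hNdiv]
    -- symmetry at the level of S
    have symmS : ∀ x : ℕ, 0 < x → x < N → (x ∈ hermS s d ↔ (N - x) ∉ hermS s d) := by
      intro x h0 hxN
      rw [mem_hermS_iff hd, mem_hermS_iff hd]
      have hmul : d * (N - x) + d * x = d * N := by
        rw [← Nat.mul_add]; congr 1; omega
      have hdx0 : 0 < d * x := Nat.mul_pos hd h0
      have hdxlt : d * x < s * s - s + 1 := by
        have h1 : 0 < d * (N - x) := Nat.mul_pos hd (by omega)
        omega
      have key : d * (N - x) = s * s - s + 1 - d * x := by omega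
      rw [key]
      exact hermT_symm hs hdx0 hdxlt
    -- gaps of S are below N
    have hbig : ∀ x : ℕ, N ≤ x → x ∈ hermS s d := by
      intro x hxN
      rw [mem_hermS_iff hd]
      apply hermT_of_big hs
      have h1 : d * N ≤ d * x := Nat.mul_le_mul le_rfl hxN
      omega
    have hsetEq : {x : ℕ | x ∉ hermS s d} =
        ↑((Finset.Ioo 0 N).filter (fun x => x ∉ hermS s d)) := by
      ext x
      simp only [Set.mem_setOf_eq, Finset.coe_filter, Finset.mem_Ioo]
      constructor
      · intro hx
        refine ⟨⟨?_, ?_⟩, hx⟩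
        · rcases Nat.eq_zero_or_pos x with rfl | h
          · exact absurd hzero hx
          · exact h
        · by_contra h
          push_neg at h
          exact hx (hbig x h)
      · exact fun h => h.2
    rw [hsetEq, Set.ncard_coe_finset]
    -- pair up gaps and non-gaps in (0, N)
    have hcards : ((Finset.Ioo 0 N).filter (fun x => x ∉ hermS s d)).card =
        ((Finset.Ioo 0 N).filter (fun x => x ∈ hermS s d)).card := by
      apply Finset.card_bij (fun a _ => N - a)
      · intro a ha
        simp only [Finset.mem_filter, Finset.mem_Ioo] at ha ⊢
        obtain ⟨⟨ha0, haN⟩, hagap⟩ := ha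
        refine ⟨⟨by omega, by omega⟩, ?_⟩
        have := symmS (N - a) (by omega) (by omega)
        rw [show N - (N - a) = a from by omega] at this
        exact this.mpr hagap
      · intro a ha b hb hab
        simp only [Finset.mem_filter, Finset.mem_Ioo] at ha hb
        omega
      · intro b hb
        simp only [Finset.mem_filter, Finset.mem_Ioo] at hb
        obtain ⟨⟨hb0, hbN⟩, hbS⟩ := hb
        refine ⟨N - b, ?_, by omega⟩
        simp only [Finset.mem_filter, Finset.mem_Ioo]
        exact ⟨⟨by omega, by omega⟩, (symmS b hb0 hbN).mp hbS⟩
    have htotal : ((Finset.Ioo 0 N).filter (fun x => x ∉ hermS s d)).card +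
        ((Finset.Ioo 0 N).filter (fun x => x ∈ hermS s d)).card = N - 1 := by
      rw [add_comm]
      rw [Finset.card_filter_add_card_filter_not (p := fun x => x ∈ hermS s d)]
      simp [Nat.card_Ioo]
    omega
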